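/- Let 0<α<1, let γ∈(0,1), let β>1 be real, and let λ∈ℝ. For every t>0, the Caputo fractional derivative of order γ of the function t ↦ t^{β−1} E_{α,β}(λ t^α) satisfies D^γ_t ( t^{β−1} E_{α,β}(λ t^α) ) = t^{β−γ−1} E_{α,β−γ}(λ t^α). -/

import Mathlib

/-- The two-parameter Mittag-Leffler function `E_{a,m}(z) = ∑ zⁿ/Γ(a n + m)`. -/
noncomputable def mlf (a m z : ℝ) : ℝ := ∑' n : ℕ, z ^ n / Real.Gamma (a * n + m)

/-- The Caputo fractional derivative of order `r ∈ (0,1)`: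
`D^r h (t) = (1/Γ(1-r)) ∫₀ᵗ (t-s)^{-r} h'(s) ds`. -/
noncomputable def caputo (r : ℝ) (h : ℝ → ℝ) (t : ℝ) : ℝ :=
  (1 / Real.Gamma (1 - r)) * ∫ s in (0:ℝ)..t, (t - s) ^ (-r) * deriv h s

open Real MeasureTheory intervalIntegral

lemma summable_mlf_aux (α c R : ℝ) (hα : 0 < α) (hc : 0 < c) (hR : 0 ≤ R) :
    Summable (fun n : ℕ => R ^ n / Real.Gamma (α * n + c)) := by
  set A : ℝ := (R + 1) ^ (1/α) with hA
  have hApos : 0 < A := Real.rpow_pos_of_pos (by linarith) _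
  have hAone : 1 ≤ A := Real.one_le_rpow (by linarith) (by positivity)
  have hAα : A ^ α = R + 1 := by
    rw [hA, ← Real.rpow_mul (by linarith), one_div, inv_mul_cancel₀ hα.ne', Real.rpow_one]
  have hsumA := Real.summable_pow_div_factorial A
  set C : ℝ := ∑' k : ℕ, A ^ k / (k : ℕ).factorial with hCdef
  have hCb : ∀ k : ℕ, A ^ k / k.factorial ≤ C := fun k =>
    Summable.le_tsum hsumA k (fun j _ => by positivity)
  have hCpos : 0 < C := lt_of_lt_of_le (by positivity : (0:ℝ) < A ^ 0 / (0:ℕ).factorial) (hCb 0)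
  have hfac : ∀ k : ℕ, (1 : ℝ) / k.factorial ≤ C / A ^ k := by
    intro k
    rw [div_le_div_iff₀ (by positivity) (by positivity)]
    have := hCb k
    rw [div_le_iff₀ (by positivity)] at this
    nlinarith [pow_pos hApos k]
  set r : ℝ := R / (R + 1) with hr
  have hr0 : 0 ≤ r := by positivity
  have hr1 : r < 1 := by rw [hr, div_lt_one (by linarith)]; linarith
  apply summable_of_isBigO_nat (summable_geometric_of_lt_one hr0 hr1)
  rw [Asymptotics.isBigO_iff]
  refine ⟨C * A ^ (2 - c), ?_⟩
  have hN : ∀ᶠ n : ℕ in Filter.atTop, (2 : ℝ) ≤ α * n + c := by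
    have := Filter.tendsto_atTop_add_const_right Filter.atTop c
      ((tendsto_natCast_atTop_atTop (R := ℝ)).const_mul_atTop hα)
    exact this.eventually_ge_atTop 2
  filter_upwards [hN] with n hn
  set x : ℝ := α * n + c with hx
  have hx2 : (2:ℝ) ≤ x := hn
  set k : ℕ := ⌊x⌋₊ with hk
  have hk2 : 2 ≤ k := Nat.le_floor hx2
  have hkx : (k : ℝ) ≤ x := Nat.floor_le (by linarith)
  have hxk : x < k + 1 := Nat.lt_floor_add_one x
  have hGk : Real.Gamma (k : ℝ) ≤ Real.Gamma x := by
    rcases eq_or_lt_of_le hkx with h | h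
    · rw [h]
    · refine (Real.Gamma_strictMonoOn_Ici ?_ ?_ h).le <;>
        simp only [Set.mem_Ici] <;> [exact_mod_cast hk2; linarith]
  have hGkval : Real.Gamma (k : ℝ) = (k - 1).factorial := by
    have h1k : 1 ≤ k := by omega
    have : ((k - 1 : ℕ) : ℝ) + 1 = (k : ℝ) := by
      push_cast [Nat.cast_sub h1k]; ring
    rw [← this, Real.Gamma_nat_eq_factorial]
  have hGpos : 0 < Real.Gamma x := Real.Gamma_pos_of_pos (by linarith)
  have hfacpos : (0:ℝ) < (k-1).factorial := by exact_mod_cast (k-1).factorial_pos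
  have step1 : R ^ n / Real.Gamma x ≤ R ^ n * (C / A ^ (k-1)) := by
    calc R ^ n / Real.Gamma x ≤ R ^ n / (k-1).factorial := by
          gcongr
          rw [← hGkval]; exact hGk
      _ = R ^ n * ((1:ℝ) / (k-1).factorial) := by ring
      _ ≤ R ^ n * (C / A ^ (k-1)) := by
          apply mul_le_mul_of_nonneg_left (hfac (k-1)) (by positivity)
  have hAk : A ^ (x - 2) ≤ A ^ (k - 1 : ℕ) := by
    rw [← Real.rpow_natCast A (k-1)]
    apply Real.rpow_le_rpow_of_exponent_le hAone
    have : ((k - 1:ℕ):ℝ) = (k:ℝ) - 1 := by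
      push_cast [Nat.cast_sub (show 1 ≤ k by omega)]; ring
    rw [this]; linarith
  have step2 : C / A ^ (k-1) ≤ C / A ^ (x - 2) := by
    exact div_le_div_of_nonneg_left hCpos.le (Real.rpow_pos_of_pos hApos _) hAk

  have hval : C / A ^ (x - 2) = C * A ^ (2 - c) / (R+1) ^ n := by
    have hxsplit : x - 2 = α * n + (c - 2) := by rw [hx]; ring
    rw [hxsplit, Real.rpow_add hApos]
    have h1 : A ^ (α * (n:ℝ)) = (R+1) ^ n := by
      rw [Real.rpow_mul hApos.le, hAα, Real.rpow_natCast]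
    rw [h1]
    rw [div_eq_div_iff (by positivity) (by positivity)]
    rw [show (2:ℝ) - c = -(c-2) by ring, Real.rpow_neg hApos.le]
    field_simp
  calc ‖R ^ n / Real.Gamma x‖ = R ^ n / Real.Gamma x := by
        rw [Real.norm_eq_abs, abs_of_nonneg (by positivity)]
    _ ≤ R ^ n * (C * A ^ (2 - c) / (R+1) ^ n) := by
        refine step1.trans ?_
        apply mul_le_mul_of_nonneg_left (step2.trans_eq hval) (by positivity)
    _ = C * A ^ (2-c) * r ^ n := by rw [hr, div_pow]; ring
    _ ≤ C * A ^ (2-c) * ‖r ^ n‖ := by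
        rw [Real.norm_eq_abs, abs_of_nonneg (by positivity)]


lemma rpow_bound {a b x : ℝ} (ha : 0 < a) (hax : a ≤ x) (hxb : x ≤ b) (p : ℝ) :
    x ^ p ≤ a ^ p + b ^ p := by
  rcases le_or_gt 0 p with hp | hp
  · have h1 : x ^ p ≤ b ^ p := Real.rpow_le_rpow (by linarith) hxb hp
    have h2 : (0:ℝ) ≤ a ^ p := Real.rpow_nonneg ha.le p
    linarith
  · have h1 : x ^ p ≤ a ^ p := Real.rpow_le_rpow_of_nonpos ha hax hp.le
    have h2 : (0:ℝ) ≤ b ^ p := Real.rpow_nonneg (by linarith) p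
    linarith


lemma rbeta_intble {u v t : ℝ} (hu : 0 < u) (hv : 0 < v) (ht : 0 < t) :
    IntervalIntegrable (fun x => x ^ (u-1) * (t - x) ^ (v-1)) volume 0 t := by
  have hmeas : AEStronglyMeasurable (fun x : ℝ => x ^ (u-1) * (t - x) ^ (v-1)) volume := by
    apply Measurable.aestronglyMeasurable; fun_prop
  rw [intervalIntegrable_iff_integrableOn_Ioc_of_le ht.le]
  have hsplit : Set.Ioc (0:ℝ) t = Set.Ioc 0 (t/2) ∪ Set.Ioc (t/2) t := by
    rw [Set.Ioc_union_Ioc_eq_Ioc (by linarith) (by linarith)]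
  rw [hsplit]
  apply IntegrableOn.union
  · have hint : IntegrableOn (fun x : ℝ => ((t/2) ^ (v-1) + t ^ (v-1)) * x ^ (u-1))
        (Set.Ioc 0 (t/2)) volume := by
      apply Integrable.const_mul
      exact intervalIntegrable_iff_integrableOn_Ioc_of_le (by linarith) |>.mp
        (intervalIntegrable_rpow' (by linarith))
    apply Integrable.mono' hint (hmeas.restrict)
    filter_upwards [ae_restrict_mem measurableSet_Ioc] with x hx
    have hx0 : 0 < x := hx.1
    have hxt : x ≤ t/2 := hx.2
    have htx : t/2 ≤ t - x := by linarith
    have htx' : t - x ≤ t := by linarith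
    rw [Real.norm_eq_abs, abs_of_nonneg
      (mul_nonneg (Real.rpow_nonneg hx0.le _) (Real.rpow_nonneg (by linarith) _))]
    calc x ^ (u-1) * (t-x) ^ (v-1) ≤ x ^ (u-1) * ((t/2) ^ (v-1) + t ^ (v-1)) := by
          apply mul_le_mul_of_nonneg_left (rpow_bound (by linarith) htx htx' _)
            (Real.rpow_nonneg hx0.le _)
      _ = ((t/2) ^ (v-1) + t ^ (v-1)) * x ^ (u-1) := by ring
  · have hone : IntervalIntegrable (fun x : ℝ => (t - x) ^ (v-1)) volume (t/2) t := by
      have h1 : IntervalIntegrable (fun x : ℝ => x ^ (v-1)) volume 0 (t/2) :=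
        intervalIntegrable_rpow' (by linarith)
      have h2 := (h1.comp_sub_left t).symm
      have e1 : t - 0 = t := by ring
      have e2 : t - t/2 = t/2 := by ring
      rw [e1, e2] at h2
      exact h2
    have hint : IntegrableOn (fun x : ℝ => ((t/2) ^ (u-1) + t ^ (u-1)) * (t - x) ^ (v-1))
        (Set.Ioc (t/2) t) volume := by
      apply Integrable.const_mul
      exact intervalIntegrable_iff_integrableOn_Ioc_of_le (by linarith) |>.mp hone
    apply Integrable.mono' hint (hmeas.restrict)
    filter_upwards [ae_restrict_mem measurableSet_Ioc] with x hx
    have hx0 : t/2 < x := hx.1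
    have hxt : x ≤ t := hx.2
    rw [Real.norm_eq_abs, abs_of_nonneg
      (mul_nonneg (Real.rpow_nonneg (by linarith) _) (Real.rpow_nonneg (by linarith) _))]
    apply mul_le_mul_of_nonneg_right (rpow_bound (by linarith) hx0.le hxt _)
      (Real.rpow_nonneg (by linarith) _)


lemma rbeta_val {u v t : ℝ} (hu : 0 < u) (hv : 0 < v) (ht : 0 < t) :
    ∫ x in (0:ℝ)..t, x ^ (u-1) * (t - x) ^ (v-1)
      = t ^ (u+v-1) * (Real.Gamma u * Real.Gamma v / Real.Gamma (u+v)) := by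
  have key : ((∫ x in (0:ℝ)..t, x ^ (u-1) * (t - x) ^ (v-1) : ℝ) : ℂ)
      = ∫ x in (0:ℝ)..t, (x:ℂ) ^ ((u:ℂ) - 1) * ((t:ℂ) - x) ^ ((v:ℂ) - 1) := by
    rw [← intervalIntegral.integral_ofReal]
    apply intervalIntegral.integral_congr
    intro x hx
    rw [Set.uIcc_of_le ht.le] at hx
    obtain ⟨hx0, hxt⟩ := hx
    show ((x ^ (u-1) * (t - x) ^ (v-1) : ℝ) : ℂ) = _
    rw [Complex.ofReal_mul, Complex.ofReal_cpow hx0, Complex.ofReal_cpow (by linarith : (0:ℝ) ≤ t - x)]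
    push_cast
    ring
  have hβ : Complex.betaIntegral u v = ((Real.Gamma u * Real.Gamma v / Real.Gamma (u+v) : ℝ) : ℂ) := by
    have h1 := Complex.Gamma_mul_Gamma_eq_betaIntegral
      (s := (u:ℂ)) (t := (v:ℂ)) (by simpa using hu) (by simpa using hv)
    have h2 : ((u:ℂ) + v) = ((u + v : ℝ) : ℂ) := by push_cast; ring
    rw [h2, Complex.Gamma_ofReal, Complex.Gamma_ofReal, Complex.Gamma_ofReal] at h1
    have h3 : Real.Gamma (u+v) ≠ 0 := (Real.Gamma_pos_of_pos (by linarith)).ne'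
    rw [Complex.ofReal_div, eq_div_iff (by exact_mod_cast h3 : ((Real.Gamma (u+v):ℝ):ℂ) ≠ 0)]
    rw [Complex.ofReal_mul, h1]; ring
  have hscaled := Complex.betaIntegral_scaled (u:ℂ) (v:ℂ) ht
  rw [← key, hβ] at hscaled
  have h4 : ((u:ℂ) + v - 1) = ((u + v - 1 : ℝ) : ℂ) := by push_cast; ring
  rw [h4, ← Complex.ofReal_cpow ht.le, ← Complex.ofReal_mul] at hscaled
  exact_mod_cast hscaled


lemma div_mul_cancel_aux (A P G w : ℝ) (hP : P ≠ 0) : A / (P * G) * (P * w) = A / G * w := by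
  rcases eq_or_ne G 0 with h | h
  · simp [h]
  · field_simp


lemma mlf_rep (α m lam : ℝ) {s : ℝ} (hs : 0 < s) :
    s ^ (m - 1) * mlf α m (lam * s ^ α)
      = ∑' n : ℕ, (lam ^ n / Real.Gamma (α * n + m)) * s ^ (α * n + m - 1) := by
  rw [mlf, ← tsum_mul_left]
  apply tsum_congr
  intro n
  rw [mul_pow, ← Real.rpow_natCast (s ^ α) n, ← Real.rpow_mul hs.le,
    show α * (n:ℝ) + m - 1 = α * n + (m - 1) by ring, Real.rpow_add hs]
  ring


lemma mlf_hasDerivAt (α β lam : ℝ) (hα : 0 < α) (hβ : 1 < β) {s : ℝ} (hs : 0 < s) :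
    HasDerivAt (fun z => z ^ (β - 1) * mlf α β (lam * z ^ α))
      (∑' n : ℕ, (lam ^ n / Real.Gamma (α * n + β - 1)) * s ^ (α * n + β - 2)) s := by
  set g : ℕ → ℝ → ℝ := fun n z => (lam ^ n / Real.Gamma (α * n + β)) * z ^ (α * n + β - 1)
    with hgdef
  set g' : ℕ → ℝ → ℝ := fun n z => (lam ^ n / Real.Gamma (α * n + β - 1)) * z ^ (α * n + β - 2)
    with hg'def
  set u : ℕ → ℝ := fun n => (|lam| ^ n / Real.Gamma (α * n + β - 1)) *
    ((s/2) ^ (α * n + β - 2) + (s+1) ^ (α * n + β - 2)) with hudef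
  have hppos : ∀ n : ℕ, 0 < α * n + β - 1 := by
    intro n
    have : 0 ≤ α * (n:ℝ) := by positivity
    linarith
  have hΓpos : ∀ n : ℕ, 0 < Real.Gamma (α * n + β - 1) := fun n =>
    Real.Gamma_pos_of_pos (hppos n)
  have hΓpos' : ∀ n : ℕ, 0 < Real.Gamma (α * n + β) := fun n =>
    Real.Gamma_pos_of_pos (by have := hppos n; linarith)
  -- summability of the bound
  have hu : Summable u := by
    have h1 : Summable (fun n : ℕ => (s/2) ^ (β-2) * ((|lam| * (s/2) ^ α) ^ n
        / Real.Gamma (α * n + (β - 1)))) :=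
      (summable_mlf_aux α (β-1) (|lam| * (s/2)^α) hα (by linarith) (by positivity)).mul_left _
    have h2 : Summable (fun n : ℕ => (s+1) ^ (β-2) * ((|lam| * (s+1) ^ α) ^ n
        / Real.Gamma (α * n + (β - 1)))) :=
      (summable_mlf_aux α (β-1) (|lam| * (s+1)^α) hα (by linarith) (by positivity)).mul_left _
    apply Summable.congr (h1.add h2)
    intro n
    have e : ∀ c : ℝ, 0 < c → c ^ (β-2) * ((|lam| * c ^ α) ^ n / Real.Gamma (α * n + (β - 1)))
        = (|lam| ^ n / Real.Gamma (α * n + β - 1)) * c ^ (α * n + β - 2) := by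
      intro c hc
      rw [mul_pow, ← Real.rpow_natCast (c ^ α) n, ← Real.rpow_mul hc.le,
        show α * (n:ℝ) + β - 2 = α * n + (β - 2) by ring, Real.rpow_add hc,
        show α * (n:ℝ) + (β-1) = α * n + β - 1 by ring]
      ring
    rw [hudef]
    simp only
    rw [e (s/2) (by linarith), e (s+1) (by linarith), mul_add]
  -- derivatives
  have hg : ∀ n z, z ∈ Set.Ioo (s/2) (s+1) → HasDerivAt (g n) (g' n z) z := by
    intro n z hz
    have hz0 : 0 < z := lt_trans (by linarith) hz.1
    have hd := (Real.hasDerivAt_rpow_const (x := z) (p := α * n + β - 1) (Or.inl hz0.ne')).const_mul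
      (lam ^ n / Real.Gamma (α * n + β))
    refine hd.congr_deriv ?_
    rw [hg'def]
    simp only
    have hΓ : Real.Gamma (α * n + β) = (α * n + β - 1) * Real.Gamma (α * n + β - 1) := by
      rw [show α * (n:ℝ) + β = (α * n + β - 1) + 1 by ring, Real.Gamma_add_one (hppos n).ne']
      norm_num
    rw [hΓ, show α * (n:ℝ) + β - 1 - 1 = α * n + β - 2 by ring,
      div_mul_cancel_aux _ _ _ _ (hppos n).ne']
  -- bounds
  have hg' : ∀ n z, z ∈ Set.Ioo (s/2) (s+1) → ‖g' n z‖ ≤ u n := by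
    intro n z hz
    have hz0 : 0 < z := lt_trans (by linarith) hz.1
    rw [hg'def, hudef]
    simp only
    rw [Real.norm_eq_abs, abs_mul, abs_div, abs_pow, abs_of_pos (hΓpos n),
      abs_of_nonneg (Real.rpow_nonneg hz0.le _)]
    apply mul_le_mul_of_nonneg_left (rpow_bound (by linarith) hz.1.le hz.2.le _)
      (div_nonneg (by positivity) (hΓpos n).le)
  -- summability at s
  have hg0 : Summable (fun n => g n s) := by
    apply Summable.of_abs
    have h1 : Summable (fun n : ℕ => s ^ (β-1) * ((|lam| * s ^ α) ^ n
        / Real.Gamma (α * n + β))) :=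
      (summable_mlf_aux α β (|lam| * s^α) hα (by linarith) (by positivity)).mul_left _
    apply Summable.congr h1
    intro n
    rw [hgdef]
    simp only
    rw [abs_mul, abs_div, abs_pow, abs_of_pos (hΓpos' n),
      abs_of_nonneg (Real.rpow_nonneg hs.le _)]
    rw [mul_pow, ← Real.rpow_natCast (s ^ α) n, ← Real.rpow_mul hs.le,
      show α * (n:ℝ) + β - 1 = α * n + (β - 1) by ring, Real.rpow_add hs]
    ring
  have hsmem : s ∈ Set.Ioo (s/2) (s+1) := Set.mem_Ioo.mpr ⟨by linarith, by linarith⟩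
  have key := hasDerivAt_tsum_of_isPreconnected hu isOpen_Ioo isPreconnected_Ioo
    hg hg' hsmem hg0 hsmem
  apply key.congr_of_eventuallyEq
  have hmem : Set.Ioi (0:ℝ) ∈ nhds s := (isOpen_Ioi).mem_nhds hs
  filter_upwards [hmem] with z hz
  exact mlf_rep α β lam hz


/-- `D^γ_t (t^{β-1} E_{α,β}(λ tᵅ)) = t^{β-γ-1} E_{α,β-γ}(λ tᵅ)` for `t > 0`,
`0 < α < 1`, `γ ∈ (0,1)`, `β > 1`, `λ ∈ ℝ`. -/
theorem caputo_mlf_power (α β γ lam : ℝ) (hα : 0 < α) (hα1 : α < 1)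
    (hγ : 0 < γ) (hγ1 : γ < 1) (hβ : 1 < β) (t : ℝ) (ht : 0 < t) :
    caputo γ (fun s => s ^ (β - 1) * mlf α β (lam * s ^ α)) t
      = t ^ (β - γ - 1) * mlf α (β - γ) (lam * t ^ α) := by
  have h1γ : 0 < 1 - γ := by linarith
  have hΓ1γ : 0 < Real.Gamma (1-γ) := Real.Gamma_pos_of_pos h1γ
  have hppos : ∀ n : ℕ, 0 < α * n + β - 1 := by
    intro n
    have : 0 ≤ α * (n:ℝ) := by positivity
    linarith
  have hqpos : ∀ n : ℕ, 0 < α * n + β - γ := by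
    intro n
    have := hppos n
    linarith
  have hΓp : ∀ n : ℕ, 0 < Real.Gamma (α * n + β - 1) := fun n => Real.Gamma_pos_of_pos (hppos n)
  have hΓq : ∀ n : ℕ, 0 < Real.Gamma (α * n + β - γ) := fun n => Real.Gamma_pos_of_pos (hqpos n)
  set c : ℕ → ℝ := fun n => lam ^ n / Real.Gamma (α * n + β - 1) with hcdef
  set F : ℕ → ℝ → ℝ := fun n s => c n * (s ^ (α * n + β - 2) * (t - s) ^ (-γ)) with hFdef
  have hint : ∀ n : ℕ, IntegrableOn (F n) (Set.Ioo 0 t) volume := by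
    intro n
    have h0 := rbeta_intble (hppos n) h1γ ht
    rw [show α * (n:ℝ) + β - 1 - 1 = α * n + β - 2 by ring,
      show (1:ℝ) - γ - 1 = -γ by ring] at h0
    have h1 : IntegrableOn (fun s : ℝ => s ^ (α * n + β - 2) * (t - s) ^ (-γ))
        (Set.Ioo 0 t) volume :=
      ((intervalIntegrable_iff_integrableOn_Ioc_of_le ht.le).mp h0).mono_set
        Set.Ioo_subset_Ioc_self
    exact h1.const_mul _
  have hval : ∀ n : ℕ, ∫ s in Set.Ioo (0:ℝ) t, s ^ (α * n + β - 2) * (t - s) ^ (-γ)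
      = t ^ (α * n + β - γ - 1) *
        (Real.Gamma (α * n + β - 1) * Real.Gamma (1-γ) / Real.Gamma (α * n + β - γ)) := by
    intro n
    have h0 := rbeta_val (hppos n) h1γ ht
    rw [show α * (n:ℝ) + β - 1 - 1 = α * n + β - 2 by ring,
      show (1:ℝ) - γ - 1 = -γ by ring,
      show α * (n:ℝ) + β - 1 + (1 - γ) - 1 = α * n + β - γ - 1 by ring,
      show α * (n:ℝ) + β - 1 + (1 - γ) = α * n + β - γ by ring] at h0
    rw [← h0, intervalIntegral.integral_of_le ht.le, MeasureTheory.integral_Ioc_eq_integral_Ioo]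
  have hnorm : ∀ n : ℕ, ∫ s in Set.Ioo (0:ℝ) t, ‖F n s‖
      = |c n| * (t ^ (α * n + β - γ - 1) *
        (Real.Gamma (α * n + β - 1) * Real.Gamma (1-γ) / Real.Gamma (α * n + β - γ))) := by
    intro n
    rw [← hval n, ← MeasureTheory.integral_const_mul]
    apply MeasureTheory.setIntegral_congr_fun measurableSet_Ioo
    intro s hs
    rw [hFdef]
    simp only
    rw [Real.norm_eq_abs, abs_mul, abs_of_nonneg (mul_nonneg (Real.rpow_nonneg hs.1.le _)
      (Real.rpow_nonneg (by have := hs.2; linarith) _))]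
  have hsum : Summable (fun n : ℕ => ∫ s in Set.Ioo (0:ℝ) t, ‖F n s‖) := by
    rw [summable_congr hnorm]
    have h1 : Summable (fun n : ℕ => (t ^ (β-γ-1) * Real.Gamma (1-γ)) *
        ((|lam| * t ^ α) ^ n / Real.Gamma (α * n + (β - γ)))) :=
      (summable_mlf_aux α (β-γ) (|lam| * t^α) hα (by linarith) (by positivity)).mul_left _
    apply Summable.congr h1
    intro n
    rw [hcdef]
    simp only
    rw [abs_div, abs_pow, abs_of_pos (hΓp n)]
    rw [mul_pow, ← Real.rpow_natCast (t ^ α) n, ← Real.rpow_mul ht.le,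
      show α * (n:ℝ) + β - γ - 1 = α * n + (β - γ - 1) by ring, Real.rpow_add ht,
      show α * (n:ℝ) + (β - γ) = α * n + β - γ by ring]
    field_simp [(hΓp n).ne', (hΓq n).ne', hΓ1γ.ne']
  have hswap := MeasureTheory.integral_tsum_of_summable_integral_norm hint hsum
  -- rewrite caputo integral
  rw [caputo, intervalIntegral.integral_of_le ht.le, MeasureTheory.integral_Ioc_eq_integral_Ioo]
  have hptwise : Set.EqOn
      (fun s => (t - s) ^ (-γ) * deriv (fun z => z ^ (β - 1) * mlf α β (lam * z ^ α)) s)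
      (fun s => ∑' n : ℕ, F n s) (Set.Ioo 0 t) := by
    intro s hs
    simp only
    rw [(mlf_hasDerivAt α β lam hα hβ hs.1).deriv, ← tsum_mul_left]
    apply tsum_congr
    intro n
    rw [hFdef, hcdef]
    simp only
    ring
  rw [MeasureTheory.setIntegral_congr_fun measurableSet_Ioo hptwise, ← hswap]
  rw [← tsum_mul_left]
  have hfinal : ∀ n : ℕ, (1 / Real.Gamma (1-γ)) * ∫ s in Set.Ioo (0:ℝ) t, F n s
      = (lam ^ n / Real.Gamma (α * n + (β - γ))) * t ^ (α * n + (β - γ) - 1) := by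
    intro n
    rw [hFdef]
    simp only
    rw [MeasureTheory.integral_const_mul, hval n, hcdef]
    simp only
    rw [show α * (n:ℝ) + (β - γ) - 1 = α * n + β - γ - 1 by ring,
      show α * (n:ℝ) + (β - γ) = α * n + β - γ by ring]
    field_simp [(hΓp n).ne', (hΓq n).ne', hΓ1γ.ne']
  rw [tsum_congr hfinal, ← mlf_rep α (β - γ) lam ht]
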